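/- Let n ≥ 2 and, for x ∈ ℝⁿ with xₙ ≠ 0, define P₁(x),…,P_{n−1}(x) as follows: R(x) = exp(−(x_{n−1}/xₙ)X)·x, Qᵣ(x) = the r-th coordinate of R(x), Pᵣ(x) = xₙ^{n−r−1}·Qᵣ(x) for 1 ≤ r ≤ n−2, and P_{n−1}(x) = xₙ. Then the functions P₁,…,P_{n−1} are algebraically independent: there is no nonzero polynomial F in n−1 variables over ℝ such that F(P₁(x),…,P_{n−1}(x)) = 0 for all x ∈ ℝⁿ with xₙ ≠ 0. -/

import Mathlib

open Matrix

/-- The regular nilpotent Jordan block: `X_{i,i+1} = 1`, all other entries `0`. -/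
noncomputable def jordanX (n : ℕ) : Matrix (Fin n) (Fin n) ℝ :=
  Matrix.of fun i j => if (i : ℕ) + 1 = (j : ℕ) then 1 else 0

/-- The action of the one-parameter unipotent group `{exp(tX) : t ∈ ℝ}` on `ℝⁿ`. -/
noncomputable def uniAct (n : ℕ) (t : ℝ) (x : Fin n → ℝ) : Fin n → ℝ :=
  (NormedSpace.exp (t • jordanX n)).mulVec x

/-- The rational invariants `P₁, …, P_{n-1}` (indexed here by `r : Fin (n-1)`, so that
`invP n hn r` is `P_{r+1}`): with `R(x) = exp(−(x_{n−1}/xₙ)X)·x` and `Qᵣ(x)` its `r`-th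
coordinate, `Pᵣ(x) = xₙ^{n−r−1}·Qᵣ(x)` for `1 ≤ r ≤ n−2` and `P_{n−1}(x) = xₙ`. -/
noncomputable def invP (n : ℕ) (hn : 2 ≤ n) (r : Fin (n - 1)) (x : Fin n → ℝ) : ℝ :=
  if (r : ℕ) = n - 2 then x ⟨n - 1, by omega⟩
  else (x ⟨n - 1, by omega⟩) ^ (n - (r : ℕ) - 2) *
    uniAct n (-(x ⟨n - 2, by omega⟩ / x ⟨n - 1, by omega⟩)) x
      ⟨(r : ℕ), lt_of_lt_of_le r.isLt (Nat.sub_le n 1)⟩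

lemma uniAct_zero (n : ℕ) (x : Fin n → ℝ) : uniAct n 0 x = x := by
  simp [uniAct, zero_smul, NormedSpace.exp_zero, Matrix.one_mulVec]

/-- A preimage point for a prescribed value vector `y`. -/
noncomputable def buildX (n : ℕ) (hn : 2 ≤ n) (y : Fin (n - 1) → ℝ) : Fin n → ℝ :=
  fun i =>
    if h1 : (i : ℕ) = n - 1 then y ⟨n - 2, by omega⟩
    else if h2 : (i : ℕ) = n - 2 then 0
    else y ⟨(i : ℕ), by have := i.isLt; omega⟩ / (y ⟨n - 2, by omega⟩) ^ (n - (i : ℕ) - 2)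

lemma buildX_last (n : ℕ) (hn : 2 ≤ n) (y : Fin (n - 1) → ℝ) :
    buildX n hn y ⟨n - 1, by omega⟩ = y ⟨n - 2, by omega⟩ := by
  simp [buildX]

lemma buildX_penult (n : ℕ) (hn : 2 ≤ n) (y : Fin (n - 1) → ℝ) :
    buildX n hn y ⟨n - 2, by omega⟩ = 0 := by
  simp only [buildX]
  rw [dif_neg (by omega)]
  simp

lemma invP_buildX (n : ℕ) (hn : 2 ≤ n) (y : Fin (n - 1) → ℝ)
    (hc : y ⟨n - 2, by omega⟩ ≠ 0) (r : Fin (n - 1)) :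
    invP n hn r (buildX n hn y) = y r := by
  unfold invP
  by_cases hr : (r : ℕ) = n - 2
  · rw [if_pos hr, buildX_last]
    congr 1
    exact Fin.ext hr.symm
  · rw [if_neg hr, buildX_last, buildX_penult]
    have ht : (-(0 / y ⟨n - 2, by omega⟩) : ℝ) = 0 := by simp
    rw [ht, uniAct_zero]
    have hrn : (r : ℕ) ≠ n - 1 := by have := r.isLt; omega
    show _ * buildX n hn y ⟨(r : ℕ), _⟩ = _
    unfold buildX
    rw [dif_neg hrn, dif_neg hr, mul_comm, div_mul_cancel₀ _ (pow_ne_zero _ hc)]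

/-- The functions `P₁, …, P_{n−1}` are algebraically independent over `ℝ`
(on the open set `xₙ ≠ 0`). -/
theorem invP_algebraically_independent (n : ℕ) (hn : 2 ≤ n) :
    ¬ ∃ F : MvPolynomial (Fin (n - 1)) ℝ, F ≠ 0 ∧
      ∀ x : Fin n → ℝ, x ⟨n - 1, by omega⟩ ≠ 0 →
        MvPolynomial.eval (fun r => invP n hn r x) F = 0 := by
  rintro ⟨F, hF, hval⟩
  have key : ∀ y : Fin (n - 1) → ℝ,
      MvPolynomial.eval y (MvPolynomial.X ⟨n - 2, by omega⟩ * F) = 0 := by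
    intro y
    rw [_root_.map_mul, MvPolynomial.eval_X]
    by_cases hc : y ⟨n - 2, by omega⟩ = 0
    · rw [hc, zero_mul]
    · have hx : buildX n hn y ⟨n - 1, by omega⟩ ≠ 0 := by
        rw [buildX_last]; exact hc
      have := hval (buildX n hn y) hx
      have heq : (fun r => invP n hn r (buildX n hn y)) = y :=
        funext fun r => invP_buildX n hn y hc r
      rw [heq] at this
      rw [this, mul_zero]
  have hz : (MvPolynomial.X ⟨n - 2, by omega⟩ * F : MvPolynomial (Fin (n - 1)) ℝ) = 0 :=
    MvPolynomial.funext fun y => by rw [key y, map_zero]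
  rcases mul_eq_zero.mp hz with h | h
  · exact MvPolynomial.X_ne_zero _ h
  · exact hF h
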